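/- Let I ⊆ ℝ be an interval, g ∈ ℝ, and let h, u, α₁, α₂ : I → ℝ be differentiable with h(x) > 0 on I and (h u)′ = 0 on I. Then for each i ∈ {1, 2} and every x ∈ I one has (2 h u α_i)′(x) − u(x) · (h α_i)′(x) = u(x) · h(x)^2 · (α_i/h)′(x); consequently, if (2 h u α_i)′ = u (h α_i)′ on I, then at each x ∈ I either u(x) = 0 or (α_i/h)′(x) = 0. -/

import Mathlib

open Set

lemma swlme2_aux (h u α : ℝ → ℝ) (x : ℝ)
    (hh : DifferentiableAt ℝ h x) (hu : DifferentiableAt ℝ u x)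
    (hα : DifferentiableAt ℝ α x) (hpos : 0 < h x)
    (hq : deriv (fun y => h y * u y) x = 0) :
    deriv (fun y => 2 * h y * u y * α y) x - u x * deriv (fun y => h y * α y) x
      = u x * h x ^ 2 * deriv (fun y => α y / h y) x := by
  have hne : h x ≠ 0 := hpos.ne'
  have h1 : deriv h x * u x + h x * deriv u x = 0 := by
    rw [← deriv_mul hh hu]; exact hq
  have d1 : deriv (fun y => 2 * h y * u y * α y) x
      = (2 * deriv h x * u x + 2 * h x * deriv u x) * α x + 2 * h x * u x * deriv α x := by
    rw [deriv_fun_mul (c := fun y => 2 * h y * u y) (((differentiableAt_const 2).mul hh).mul hu) hα,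
        deriv_fun_mul (c := fun y => 2 * h y) ((differentiableAt_const 2).mul hh) hu,
        deriv_const_mul 2 hh]
    try ring
  have d2 : deriv (fun y => h y * α y) x = deriv h x * α x + h x * deriv α x :=
    deriv_mul hh hα
  have d3 : deriv (fun y => α y / h y) x
      = (deriv α x * h x - α x * deriv h x) / h x ^ 2 := deriv_div hα hh hne
  rw [d1, d2, d3]
  field_simp
  linear_combination (2 * α x) * h1


/-- SWLME2 moment identities: with `h > 0` and constant discharge `(h u)' = 0`,
for each `i ∈ {1,2}` one has
`(2 h u αᵢ)'(x) - u(x) (h αᵢ)'(x) = u(x) h(x)² (αᵢ/h)'(x)`;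
consequently, if `(2 h u αᵢ)' = u (h αᵢ)'` on `I`, then at each point either
`u = 0` or `(αᵢ/h)' = 0`. -/
theorem swlme2_moment_identities
    (I : Set ℝ) (hI : I.OrdConnected) (g : ℝ) (h u α₁ α₂ : ℝ → ℝ)
    (hh : ∀ x ∈ I, DifferentiableAt ℝ h x)
    (hu : ∀ x ∈ I, DifferentiableAt ℝ u x)
    (hα₁ : ∀ x ∈ I, DifferentiableAt ℝ α₁ x)
    (hα₂ : ∀ x ∈ I, DifferentiableAt ℝ α₂ x)
    (hpos : ∀ x ∈ I, 0 < h x)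
    (hq : ∀ x ∈ I, deriv (fun y => h y * u y) x = 0) :
    (∀ x ∈ I,
      deriv (fun y => 2 * h y * u y * α₁ y) x - u x * deriv (fun y => h y * α₁ y) x
        = u x * h x ^ 2 * deriv (fun y => α₁ y / h y) x) ∧
    (∀ x ∈ I,
      deriv (fun y => 2 * h y * u y * α₂ y) x - u x * deriv (fun y => h y * α₂ y) x
        = u x * h x ^ 2 * deriv (fun y => α₂ y / h y) x) ∧
    ((∀ x ∈ I, deriv (fun y => 2 * h y * u y * α₁ y) x
        = u x * deriv (fun y => h y * α₁ y) x) →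
      ∀ x ∈ I, u x = 0 ∨ deriv (fun y => α₁ y / h y) x = 0) ∧
    ((∀ x ∈ I, deriv (fun y => 2 * h y * u y * α₂ y) x
        = u x * deriv (fun y => h y * α₂ y) x) →
      ∀ x ∈ I, u x = 0 ∨ deriv (fun y => α₂ y / h y) x = 0) := by
  have A1 : ∀ x ∈ I,
      deriv (fun y => 2 * h y * u y * α₁ y) x - u x * deriv (fun y => h y * α₁ y) x
        = u x * h x ^ 2 * deriv (fun y => α₁ y / h y) x :=
    fun x hx => swlme2_aux h u α₁ x (hh x hx) (hu x hx) (hα₁ x hx) (hpos x hx) (hq x hx)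
  have A2 : ∀ x ∈ I,
      deriv (fun y => 2 * h y * u y * α₂ y) x - u x * deriv (fun y => h y * α₂ y) x
        = u x * h x ^ 2 * deriv (fun y => α₂ y / h y) x :=
    fun x hx => swlme2_aux h u α₂ x (hh x hx) (hu x hx) (hα₂ x hx) (hpos x hx) (hq x hx)
  refine ⟨A1, A2, ?_, ?_⟩
  · intro H x hx
    have hz := A1 x hx
    rw [H x hx, sub_self] at hz
    rcases mul_eq_zero.1 hz.symm with hz1 | hz1
    · rcases mul_eq_zero.1 hz1 with hz2 | hz2
      · exact Or.inl hz2
      · exact absurd hz2 (pow_ne_zero 2 (hpos x hx).ne')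
    · exact Or.inr hz1
  · intro H x hx
    have hz := A2 x hx
    rw [H x hx, sub_self] at hz
    rcases mul_eq_zero.1 hz.symm with hz1 | hz1
    · rcases mul_eq_zero.1 hz1 with hz2 | hz2
      · exact Or.inl hz2
      · exact absurd hz2 (pow_ne_zero 2 (hpos x hx).ne')
    · exact Or.inr hz1
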